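/- Ω-injectivity of the matching is necessary for LRR-rewriting: there exist an LRR-rewrite rule L ← D(L,E) → R and a non-Ω-injective matching μ : L → U such that no pushout of the span D(U,μ(E)) ← D(L,E) → R exists in the category of graphs. Concretely, take L with two nodes n₁:g, n₂:g (g unary) where succ(n₁,1)=n₂ and succ(n₂,1)=n₃ unlabeled, E = {(n₁,1),(n₂,1)}, R = D(L,E) with n₁[1] labeled b and n₂[1] labeled c (b ≠ c constants), ρ the identity on nodes, and U with a single node m:g with succ(m,1)=o:a; the matching μ identifying n₁ and n₂ to m yields a span with no pushout. -/

import Mathlib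

open CategoryTheory

/-- A graph over a signature `Ω` with arity function `ar`: nodes, an (implicit) subset of
labeled nodes (those where `label` is `some`), and a successor function assigning to each
labeled node a string of nodes whose length is the arity of its label. Unlabeled nodes
have no successors. -/
structure TermGraph (Ω : Type) (ar : Ω → ℕ) where
  N : Type
  label : N → Option Ω
  succ : N → List N
  hlen : ∀ n f, label n = some f → (succ n).length = ar f
  hnone : ∀ n, label n = none → succ n = []

namespace TermGraph

variable {Ω : Type} {ar : Ω → ℕ}

/-- A graph homomorphism: a map on nodes preserving labeledness, labels and successors. -/
@[ext]
structure Hom (G H : TermGraph Ω ar) where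
  toFun : G.N → H.N
  map_label : ∀ n f, G.label n = some f → H.label (toFun n) = some f
  map_succ : ∀ n f, G.label n = some f → H.succ (toFun n) = (G.succ n).map toFun

def Hom.id (G : TermGraph Ω ar) : Hom G G :=
  ⟨fun n => n, fun _ _ h => h, fun n _ _ => by simp⟩

def Hom.comp {G H K : TermGraph Ω ar} (φ : Hom G H) (ψ : Hom H K) : Hom G K where
  toFun := fun n => ψ.toFun (φ.toFun n)
  map_label := fun n f h => ψ.map_label _ f (φ.map_label n f h)
  map_succ := fun n f h => by
    rw [ψ.map_succ _ f (φ.map_label n f h), φ.map_succ n f h, List.map_map]; rfl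

instance : Category (TermGraph Ω ar) where
  Hom := Hom
  id := Hom.id
  comp := Hom.comp
  id_comp := by intros; rfl
  comp_id := by intros; rfl
  assoc := by intros; rfl

/-- An edge of a graph: a labeled node together with a position among its successors. -/
def Edge (G : TermGraph Ω ar) := Σ n : G.N, Fin (G.succ n).length

lemma Edge.label_isSome {G : TermGraph Ω ar} (e : G.Edge) : (G.label e.1).isSome := by
  have h2 : 0 < (G.succ e.1).length := Nat.lt_of_le_of_lt (Nat.zero_le _) e.2.isLt
  cases hl : G.label e.1 with
  | none => rw [G.hnone e.1 hl] at h2; simp at h2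
  | some f => rfl

/-- The image of an edge under a homomorphism. -/
def Hom.edgeMap {G H : TermGraph Ω ar} (φ : Hom G H) (e : G.Edge) : H.Edge :=
  ⟨φ.toFun e.1, ⟨e.2, by
    obtain ⟨f, hf⟩ := Option.isSome_iff_exists.mp e.label_isSome
    rw [φ.map_succ e.1 f hf, List.length_map]; exact e.2.isLt⟩⟩

open Classical in
/-- The disconnected graph `D(G,E)`: nodes of `G` plus a fresh unlabeled node `n[i]`
for each edge `(n,i) ∈ E`, with each edge of `E` redirected to its fresh node. -/
noncomputable def D (G : TermGraph Ω ar) (E : Set G.Edge) : TermGraph Ω ar where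
  N := G.N ⊕ {e : G.Edge // e ∈ E}
  label := Sum.elim G.label fun _ => none
  succ := Sum.elim
    (fun n => List.ofFn fun i : Fin (G.succ n).length =>
      if h : (⟨n, i⟩ : G.Edge) ∈ E then Sum.inr ⟨⟨n, i⟩, h⟩ else Sum.inl ((G.succ n).get i))
    (fun _ => [])
  hlen := by
    rintro (n | e) f h
    · simpa using G.hlen n f h
    · simp at h
  hnone := by
    rintro (n | e) h
    · simp only [Sum.elim_inl] at h ⊢
      simp [List.ofFn_eq_nil_iff, G.hnone n h]
    · rfl

/-- The connection homomorphism `δ_{G,E} : D(G,E) → G`. -/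
noncomputable def delta (G : TermGraph Ω ar) (E : Set G.Edge) : Hom (G.D E) G where
  toFun := Sum.elim (fun n => n) (fun e => (G.succ e.1.1).get e.1.2)
  map_label := by
    rintro (n | e) f h
    · exact h
    · simp [D] at h
  map_succ := by
    rintro (n | e) f h
    · simp only [D, Sum.elim_inl, List.map_ofFn]
      apply List.ext_getElem
      · simp
      · intro i h1 h2
        simp only [List.getElem_ofFn, Function.comp_apply]
        split <;> simp [List.get_eq_getElem]
    · simp [D] at h
end TermGraph
namespace TermGraph
variable {Ω : Type} {ar : Ω → ℕ}

/-- The underlying node map of the disconnected homomorphism `D_{φ,E}`. -/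
def dmapFun {G H : TermGraph Ω ar} (φ : Hom G H) (E : Set G.Edge) :
    (G.D E).N → (H.D (φ.edgeMap '' E)).N :=
  Sum.elim (fun n => Sum.inl (φ.toFun n))
    (fun e => Sum.inr ⟨φ.edgeMap e.1, Set.mem_image_of_mem _ e.2⟩)

/-- `μ` is `Ω`-injective if it is injective on labeled nodes. -/
def OmegaInjective {G H : TermGraph Ω ar} (μ : Hom G H) : Prop :=
  ∀ n n', (G.label n).isSome → (G.label n').isSome → μ.toFun n = μ.toFun n' → n = n'

/-- The conditions on the right leg `ρ : D(L,E) → R` of an LRR-rewrite rule: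
unlabeled nodes of `L` are mapped to unlabeled nodes of `R`, injectively. -/
def IsLRRRule {L R : TermGraph Ω ar} (E : Set L.Edge) (ρ : Hom (L.D E) R) : Prop :=
  (∀ n : L.N, L.label n = none → R.label (ρ.toFun (Sum.inl n)) = none) ∧
  (∀ n n' : L.N, L.label n = none → L.label n' = none →
      ρ.toFun (Sum.inl n) = ρ.toFun (Sum.inl n') → n = n')

section Span
variable {G₀ G₁ G₂ : TermGraph Ω ar}

/-- The relation on `N₁ + N₂` generated by a span: `φ₁(n₀) ∼ φ₂(n₀)`. -/
def spanRel (φ₁ : Hom G₀ G₁) (φ₂ : Hom G₀ G₂) : (G₁.N ⊕ G₂.N) → (G₁.N ⊕ G₂.N) → Prop :=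
  fun x y => ∃ n₀, x = Sum.inl (φ₁.toFun n₀) ∧ y = Sum.inr (φ₂.toFun n₀)

/-- Label of a node of the disjoint union. -/
def nodeLabel (G₁ G₂ : TermGraph Ω ar) : (G₁.N ⊕ G₂.N) → Option Ω :=
  Sum.elim G₁.label G₂.label

/-- Successors of a node of the disjoint union. -/
def nodeSucc (G₁ G₂ : TermGraph Ω ar) : (G₁.N ⊕ G₂.N) → List (G₁.N ⊕ G₂.N) :=
  Sum.elim (fun n => (G₁.succ n).map Sum.inl) (fun n => (G₂.succ n).map Sum.inr)

/-- A span of graphs is strongly labeled if in each equivalence class all labeled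
nodes share the same label and have pairwise equivalent successors. -/
def StronglyLabeled (φ₁ : Hom G₀ G₁) (φ₂ : Hom G₀ G₂) : Prop :=
  ∀ x y, Relation.EqvGen (spanRel φ₁ φ₂) x y →
    ∀ f g, nodeLabel G₁ G₂ x = some f → nodeLabel G₁ G₂ y = some g →
      f = g ∧ List.Forall₂ (Relation.EqvGen (spanRel φ₁ φ₂)) (nodeSucc G₁ G₂ x) (nodeSucc G₁ G₂ y)

open Classical in
/-- The candidate pushout graph of a span: nodes are the quotient of `N₁ + N₂`,
labeled classes are those containing a labeled node, labels and successors are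
taken from a (chosen) labeled representative. -/
noncomputable def pushoutGraph (φ₁ : Hom G₀ G₁) (φ₂ : Hom G₀ G₂) : TermGraph Ω ar where
  N := Quot (spanRel φ₁ φ₂)
  label := fun c =>
    if h : ∃ x, Quot.mk _ x = c ∧ (nodeLabel G₁ G₂ x).isSome
    then nodeLabel G₁ G₂ h.choose else none
  succ := fun c =>
    if h : ∃ x, Quot.mk _ x = c ∧ (nodeLabel G₁ G₂ x).isSome
    then (nodeSucc G₁ G₂ h.choose).map (Quot.mk _) else []
  hlen := by
    intro c f h
    try dsimp only at h ⊢
    by_cases hx : ∃ x, Quot.mk _ x = c ∧ (nodeLabel G₁ G₂ x).isSome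
    · rw [dif_pos hx] at h ⊢
      rw [List.length_map]
      rcases hc : hx.choose with n | n <;> rw [hc] at h <;>
        simp only [nodeLabel, nodeSucc, Sum.elim_inl, Sum.elim_inr] at h ⊢ <;>
        rw [List.length_map]
      · exact G₁.hlen n f h
      · exact G₂.hlen n f h
    · rw [dif_neg hx] at h; simp at h
  hnone := by
    intro c h
    try dsimp only at h ⊢
    by_cases hx : ∃ x, Quot.mk _ x = c ∧ (nodeLabel G₁ G₂ x).isSome
    · rw [dif_pos hx] at h
      have := hx.choose_spec.2
      rw [h] at this; simp at this
    · rw [dif_neg hx]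

end Span

open Classical in
/-- The disconnected graph `D̄(G,o)`: `G` plus a fresh unlabeled node `mr`, with
all edges targeting `o` redirected to `mr`. -/
noncomputable def Dbar (G : TermGraph Ω ar) (o : G.N) : TermGraph Ω ar where
  N := G.N ⊕ Unit
  label := Sum.elim G.label fun _ => none
  succ := Sum.elim
    (fun n => (G.succ n).map fun t => if t = o then Sum.inr () else Sum.inl t)
    (fun _ => [])
  hlen := by
    rintro (n | u) f h
    · simp only [Sum.elim_inl] at h ⊢
      rw [List.length_map]; exact G.hlen n f h
    · simp at h
  hnone := by
    rintro (n | u) h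
    · simp only [Sum.elim_inl] at h ⊢
      rw [G.hnone n h]; rfl
    · rfl

open Classical in
/-- The homomorphism `δ_μ : D̄(G,o) → G`, identity on `N_G`, sending `mr` to `o`. -/
noncomputable def deltaBar (G : TermGraph Ω ar) (o : G.N) : Hom (G.Dbar o) G where
  toFun := Sum.elim (fun n => n) fun _ => o
  map_label := by
    rintro (n | u) f h
    · exact h
    · simp [Dbar] at h
  map_succ := by
    rintro (n | u) f h
    · simp only [Dbar, Sum.elim_inl, List.map_map]
      symm
      refine (List.map_congr_left ?_).trans (List.map_id _)
      intro t ht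
      by_cases h' : t = o <;> simp [h']
    · simp [Dbar] at h

open Classical in
/-- The graph obtained from `U` by redirecting all edges targeting `a` towards `b`. -/
noncomputable def redirect (U : TermGraph Ω ar) (a b : U.N) : TermGraph Ω ar where
  N := U.N
  label := U.label
  succ := fun n => (U.succ n).map fun t => if t = a then b else t
  hlen := by intro n f h; (try dsimp only); rw [List.length_map]; exact U.hlen n f h
  hnone := by intro n h; (try dsimp only); rw [U.hnone n h]; rfl

/-- The graph `P` with two unlabeled nodes: `false` is `ar`, `true` is `pr`. -/
def P (Ω : Type) (ar : Ω → ℕ) : TermGraph Ω ar :=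
  ⟨Bool, fun _ => none, fun _ => [], fun _ _ h => by simp at h, fun _ _ => rfl⟩

/-- The switch graph `SW` with three unlabeled nodes: `some false` is `ar`,
`some true` is `pr`, `none` is `mr`. -/
def SW (Ω : Type) (ar : Ω → ℕ) : TermGraph Ω ar :=
  ⟨Option Bool, fun _ => none, fun _ => [], fun _ _ h => by simp at h, fun _ _ => rfl⟩

/-- `λ : SW → P`, sending `ar, mr ↦ ar` and `pr ↦ pr`. -/
def lamGR : Hom (SW Ω ar) (P Ω ar) :=
  ⟨fun x => x.getD false, fun _ _ h => by simp [SW] at h, fun _ _ h => by simp [SW] at h⟩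

/-- `ρ : SW → P`, sending `ar ↦ ar` and `pr, mr ↦ pr`. -/
def rhoGR : Hom (SW Ω ar) (P Ω ar) :=
  ⟨fun x => x.getD true, fun _ _ h => by simp [SW] at h, fun _ _ h => by simp [SW] at h⟩

/-- `D̄_μ : SW → D̄(U, μ(ar))`. -/
noncomputable def dbarMu {U : TermGraph Ω ar} (μ : Hom (P Ω ar) U) :
    Hom (SW Ω ar) (U.Dbar (μ.toFun false)) where
  toFun := fun x => match x with
    | some b => Sum.inl (μ.toFun b)
    | none => Sum.inr ()
  map_label := fun _ _ h => by simp [SW] at h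
  map_succ := fun _ _ h => by simp [SW] at h

/-- A graph with a single unlabeled node. -/
def oneUnlabeled (Ω : Type) (ar : Ω → ℕ) : TermGraph Ω ar :=
  ⟨PUnit, fun _ => none, fun _ => [], fun _ _ h => by simp at h, fun _ _ => rfl⟩

/-- A graph with a single node labeled `a` (looping on itself `ar a` times). -/
def singleLabeled (a : Ω) : TermGraph Ω ar :=
  ⟨PUnit, fun _ => some a, fun _ => List.replicate (ar a) PUnit.unit,
   fun _ f h => by cases h; simp, fun _ h => by simp at h⟩

/-- The unique homomorphism from the one-point unlabeled graph to `singleLabeled a`. -/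
def toSingle (a : Ω) : Hom (oneUnlabeled Ω ar) (singleLabeled a) :=
  ⟨fun _ => PUnit.unit, fun _ _ h => by simp [oneUnlabeled] at h,
   fun _ _ h => by simp [oneUnlabeled] at h⟩

end TermGraph

namespace CE

inductive Sig : Type | g | b | c
deriving DecidableEq

def arS : Sig → ℕ | .g => 1 | _ => 0

def L : TermGraph Sig arS where
  N := Bool
  label := fun _ => some .g
  succ := fun n => [n]
  hlen := fun _ f h => by injection h with h; subst h; rfl
  hnone := fun _ h => by simp at h

def E : Set L.Edge := Set.univ

noncomputable def R : TermGraph Sig arS where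
  N := (L.D E).N
  label := Sum.elim (fun _ => some .g) (fun e => cond e.1.1 (some .c) (some .b))
  succ := (L.D E).succ
  hlen := by
    rintro (n | e) f h
    · simp only [Sum.elim_inl] at h
      injection h with h; subst h
      have := (L.D E).hlen (Sum.inl n) .g rfl
      exact this
    · simp only [Sum.elim_inr] at h
      cases hb : e.1.1 <;> rw [hb] at h <;> injection h with h <;> subst h <;>
        exact (L.D E).hnone (Sum.inr e) rfl ▸ rfl
  hnone := by
    rintro (n | e) h
    · simp at h
    · simp only [Sum.elim_inr] at h
      cases hb : e.1.1 <;> rw [hb] at h <;> simp at h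

noncomputable def ρ : TermGraph.Hom (L.D E) R where
  toFun := _root_.id
  map_label := by
    rintro (n | e) f h
    · exact h
    · simp [TermGraph.D] at h
  map_succ := by
    rintro (n | e) f h
    · simp only [_root_.id, List.map_id]; rfl
    · simp [TermGraph.D] at h

def U : TermGraph Sig arS where
  N := Unit
  label := fun _ => some .g
  succ := fun _ => [()]
  hlen := fun _ f h => by injection h with h; subst h; rfl
  hnone := fun _ h => by simp at h

def μ : TermGraph.Hom L U where
  toFun := fun _ => ()
  map_label := fun _ _ h => h
  map_succ := fun _ _ _ => rfl

lemma hmem (i : Fin (U.succ ()).length) : (⟨(), i⟩ : U.Edge) ∈ μ.edgeMap '' E := by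
  refine ⟨⟨false, ⟨0, by simp [L]⟩⟩, trivial, ?_⟩
  obtain ⟨iv, hiv⟩ := i
  have h1 : iv < 1 := hiv
  interval_cases iv
  rfl

noncomputable def d : TermGraph.Hom (L.D E) (U.D (μ.edgeMap '' E)) where
  toFun := TermGraph.dmapFun μ E
  map_label := by
    rintro (n | e) f h
    · exact h
    · simp [TermGraph.D] at h
  map_succ := by
    rintro (n | e) f h
    · show (U.D (μ.edgeMap '' E)).succ (Sum.inl ()) = _
      simp only [TermGraph.D]
      apply List.ext_getElem
      · rfl
      · intro i h1 h2
        have hi : i = 0 := by simp [U] at h1; omega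
        subst hi
        classical
        show (if h : _ then _ else _) = TermGraph.dmapFun μ E (if h : _ then _ else _)
        have hA := hmem ⟨0, by simp [U]⟩
        have hB : (⟨n, ⟨0, Nat.one_pos⟩⟩ : L.Edge) ∈ E := trivial
        refine (dif_pos hA).trans ?_
        refine Eq.trans ?_ (congrArg (TermGraph.dmapFun μ E) (dif_pos hB)).symm
        rfl
    · simp [TermGraph.D] at h

end CE

/-- Ω-injectivity of the matching is necessary: there exist an
LRR-rewrite rule and a non-Ω-injective matching `μ` such that the span
`D(U,μ(E)) ← D(L,E) → R` has no pushout in the category of graphs (as in the example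
with `L` having two `g`-labeled nodes merged by `μ`, and fresh targets relabeled by
distinct constants `b ≠ c` in `R`). -/
theorem omega_injectivity_necessary :
    ∃ (Ω : Type) (ar : Ω → ℕ) (L R U : TermGraph Ω ar) (E : Set L.Edge)
      (ρ : TermGraph.Hom (L.D E) R) (μ : TermGraph.Hom L U)
      (d : TermGraph.Hom (L.D E) (U.D (μ.edgeMap '' E))),
      TermGraph.IsLRRRule E ρ ∧
      ¬ TermGraph.OmegaInjective μ ∧
      d.toFun = TermGraph.dmapFun μ E ∧
      ¬ ∃ (V : TermGraph Ω ar) (i₁ : TermGraph.Hom (U.D (μ.edgeMap '' E)) V)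
          (i₂ : TermGraph.Hom R V), IsPushout (C := TermGraph Ω ar) d ρ i₁ i₂ := by
  refine ⟨CE.Sig, CE.arS, CE.L, CE.R, CE.U, CE.E, CE.ρ, CE.μ, CE.d, ?_, ?_, rfl, ?_⟩
  · constructor
    · intro n hn; simp [CE.L] at hn
    · intro n n' hn; simp [CE.L] at hn
  · intro hinj
    have := hinj false true (by simp [CE.L]) (by simp [CE.L]) rfl
    simp at this
  · rintro ⟨V, i₁, i₂, hpo⟩
    have w := hpo.w
    have hw := congrArg TermGraph.Hom.toFun w
    set x₁ : (CE.L.D CE.E).N :=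
      Sum.inr ⟨⟨false, ⟨0, by simp [CE.L]⟩⟩, trivial⟩ with hx₁
    set x₂ : (CE.L.D CE.E).N :=
      Sum.inr ⟨⟨true, ⟨0, by simp [CE.L]⟩⟩, trivial⟩ with hx₂
    have h1 : i₁.toFun (CE.d.toFun x₁) = i₂.toFun (CE.ρ.toFun x₁) := congrFun hw x₁
    have h2 : i₁.toFun (CE.d.toFun x₂) = i₂.toFun (CE.ρ.toFun x₂) := congrFun hw x₂
    have hd : CE.d.toFun x₁ = CE.d.toFun x₂ := rfl
    have heq : i₂.toFun x₁ = i₂.toFun x₂ := by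
      have : i₂.toFun (CE.ρ.toFun x₁) = i₂.toFun (CE.ρ.toFun x₂) := by
        rw [← h1, ← h2, hd]
      exact this
    have hb : V.label (i₂.toFun x₁) = some CE.Sig.b := i₂.map_label x₁ CE.Sig.b rfl
    have hc : V.label (i₂.toFun x₂) = some CE.Sig.c := i₂.map_label x₂ CE.Sig.c rfl
    rw [heq, hc] at hb
    simp at hb
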